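/- Let κ ∈ ℕ* with κ ≥ 2, and let x, y ∈ ℝ be such that U_{κ−1}(x) ≠ 0 and U_{κ−1}(y) ≠ 0. Then T_κ(x) = T_κ(y) if and only if U_{ακ−1}(x)·U_{βκ−1}(y) − U_{ακ−1}(y)·U_{βκ−1}(x) = 0 for all α, β ∈ ℕ*. -/
import Mathlib

open Polynomial Polynomial.Chebyshev

variable (R : Type*) [CommRing R]

theorem myMul_U (m k : ℤ) : 2 * T R k * U R m = U R (m + k) + U R (m - k) := by
  induction k using Polynomial.Chebyshev.induct with
  | zero => simp [two_mul]
  | one => rw [T_one]; linear_combination (norm := ring_nf) -(U_add_one R m)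
  | add_two k ih1 ih2 =>
    have h₁ := U_add_two R (m + k)
    have h₂ := U_sub_two R (m - k)
    have h₃ := T_add_two R k
    linear_combination (norm := ring_nf) 2 * U R m * h₃ - h₂ - h₁ - ih2 + 2 * (X : R[X]) * ih1
  | neg_add_one k ih1 ih2 =>
    have h₁ := U_add_two R (m + (-k - 1))
    have h₂ := U_sub_two R (m - (-k - 1))
    have h₃ := T_add_two R (-k - 1)
    linear_combination (norm := ring_nf) 2 * U R m * h₃ - h₂ - h₁ - ih2 + 2 * (X : R[X]) * ih1

theorem myU_mul (a n : ℤ) :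
    U R (a * n - 1) = ((U R (a - 1)).comp (T R n)) * U R (n - 1) := by
  induction a using Polynomial.Chebyshev.induct with
  | zero => simp [U_neg_one, U_neg_two]
  | one => simp
  | add_two a ih1 ih2 =>
    have h₁ := myMul_U R ((a + 1) * n - 1) n
    have h₂ := congr_arg (comp · (T R n)) <| U_add_one R a
    simp only [sub_comp, mul_comp, ofNat_comp, X_comp] at h₂
    have e1 : ((a : ℤ) + 2) * n - 1 = (a + 1) * n - 1 + n := by ring
    have e2 : ((a : ℤ) + 1) * n - 1 - n = a * n - 1 := by ring
    have e3 : ((a : ℤ) + 2) - 1 = a + 1 := by ring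
    have e4 : ((a : ℤ) + 1) - 1 = a := by ring
    rw [e1, e3]
    rw [e2] at h₁; rw [e4] at ih1
    linear_combination (norm := ring_nf) -h₁ + 2 * T R n * ih1 - ih2 - U R (n - 1) * h₂
  | neg_add_one a ih1 ih2 =>
    have h₁ := myMul_U R ((-a : ℤ) * n - 1) n
    have h₂ := congr_arg (comp · (T R n)) <| U_sub_two R (-a)
    simp only [sub_comp, mul_comp, ofNat_comp, X_comp] at h₂
    have e1 : ((-a : ℤ)) * n - 1 + n = (-a + 1) * n - 1 := by ring
    have e2 : ((-a : ℤ)) * n - 1 - n = (-a - 1) * n - 1 := by ring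
    have e3 : ((-a : ℤ) - 1) - 1 = -a - 2 := by ring
    have e4 : ((-a : ℤ) + 1) - 1 = -a := by ring
    rw [e3]
    rw [e1, e2] at h₁; rw [e4] at ih2
    linear_combination (norm := ring_nf) -h₁ + 2 * T R n * ih1 - ih2 - U R (n - 1) * h₂

open Real

/-- Chebyshev polynomial of the first kind, as a real function. -/
noncomputable def chebT (n : ℕ) (x : ℝ) : ℝ := (Polynomial.Chebyshev.T ℝ n).eval x

/-- Chebyshev polynomial of the second kind, as a real function. -/
noncomputable def chebU (n : ℕ) (x : ℝ) : ℝ := (Polynomial.Chebyshev.U ℝ n).eval x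

theorem chebU_key (a κ : ℕ) (ha : 1 ≤ a) (hκ : 1 ≤ κ) (x : ℝ) :
    chebU (a * κ - 1) x = (U ℝ ((a : ℤ) - 1)).eval (chebT κ x) * chebU (κ - 1) x := by
  have h1 : 1 ≤ a * κ := Nat.one_le_iff_ne_zero.2 (Nat.mul_ne_zero (by omega) (by omega))
  unfold chebU chebT
  have c1 : ((a * κ - 1 : ℕ) : ℤ) = (a : ℤ) * κ - 1 := by push_cast [h1]; ring
  have c2 : ((κ - 1 : ℕ) : ℤ) = (κ : ℤ) - 1 := by push_cast [hκ]; ring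
  rw [c1, c2, myU_mul ℝ a κ, Polynomial.eval_mul, Polynomial.eval_comp]

/-- For `U_{κ-1}(x), U_{κ-1}(y) ≠ 0`: `T_κ(x) = T_κ(y)` iff all the commutators
`[U_{ακ-1}(x), U_{βκ-1}(y)]` vanish. -/
theorem chebT_eq_iff_commutators_vanish (κ : ℕ) (hκ : 2 ≤ κ) (x y : ℝ)
    (hx : chebU (κ - 1) x ≠ 0) (hy : chebU (κ - 1) y ≠ 0) :
    chebT κ x = chebT κ y ↔
      ∀ α β : ℕ, 1 ≤ α → 1 ≤ β →
        chebU (α * κ - 1) x * chebU (β * κ - 1) y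
          - chebU (α * κ - 1) y * chebU (β * κ - 1) x = 0 := by
  have hκ1 : 1 ≤ κ := by omega
  constructor
  · intro hT α β hα hβ
    rw [chebU_key α κ hα hκ1 x, chebU_key α κ hα hκ1 y, chebU_key β κ hβ hκ1 x,
      chebU_key β κ hβ hκ1 y, hT]
    ring
  · intro h
    have h21 := h 2 1 (by norm_num) (by norm_num)
    rw [chebU_key 2 κ (by norm_num) hκ1 x, chebU_key 2 κ (by norm_num) hκ1 y,
      chebU_key 1 κ le_rfl hκ1 x, chebU_key 1 κ le_rfl hκ1 y] at h21
    norm_num [U_one, U_zero] at h21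
    have key : (chebT κ x - chebT κ y) * (2 * chebU (κ - 1) x * chebU (κ - 1) y) = 0 := by
      linear_combination h21
    rcases mul_eq_zero.1 key with h' | h'
    · linarith
    · exact absurd h' (by positivity)
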